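/- Let A and B be WAP-algebras. Then the direct sum A ⊕ B, with coordinatewise algebra operations and norm ‖(a,b)‖ = max(‖a‖, ‖b‖), is a WAP-algebra. -/

import Mathlib

noncomputable section
open Metric Set Function ContinuousLinearMap NormedSpace

section WAPDefs

variable (B : Type*) [NormedAddCommGroup B] [NormedSpace ℂ B]

/-- The set of weakly almost periodic functionals on a Banach space `B` equipped with a
continuous bilinear multiplication `m`: those `f` in the dual for which the orbit
`{f · a : ‖a‖ ≤ 1}` (where `(f · a)(b) = f (a * b)`) is relatively compact in the weak
topology `σ(B*, B**)` of the dual `B*`. -/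
def WAPset (m : B →L[ℂ] B →L[ℂ] B) : Set (StrongDual ℂ B) :=
  {f | IsCompact (closure
    ((fun a => toWeakSpace ℂ (StrongDual ℂ B) (f.comp (m a))) '' closedBall (0 : B) 1))}

/-- The WAP-seminorm `‖a‖_WAP = sup {|f a| : f ∈ WAP(B), ‖f‖ ≤ 1}`. -/
def wapNorm (m : B →L[ℂ] B →L[ℂ] B) (a : B) : ℝ :=
  sSup {r : ℝ | ∃ f ∈ WAPset B m, ‖f‖ ≤ 1 ∧ r = ‖f a‖}

/-- `B` (with multiplication `m`) is a WAP-algebra when the canonical map into `WAP(B)*`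
is bounded below, i.e. `sup {|f a| : f ∈ WAP(B), ‖f‖ ≤ 1} ≥ c ‖a‖` for some `c > 0`. -/
def IsWAPAlgebra (m : B →L[ℂ] B →L[ℂ] B) : Prop :=
  ∃ c > 0, ∀ a : B, c * ‖a‖ ≤ wapNorm B m a

/-- The canonical evaluation map from `B` into the dual of a subspace `X ⊆ B*`. -/
def dualEval (X : Submodule ℂ (StrongDual ℂ B)) (a : B) : StrongDual ℂ X :=
  (inclusionInDoubleDual ℂ B a).comp X.subtypeL

/-- `B` (with multiplication `m`) is a dual Banach algebra with predual `X`: `X` is a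
norm-closed subspace of `B*` which is a sub-bimodule for the actions `(f·b)(c) = f (b * c)`
and `(b·f)(c) = f (c * b)`, and the canonical evaluation map `B → X*` is an isometric
isomorphism. -/
structure IsDualBanachAlgebra (m : B →L[ℂ] B →L[ℂ] B)
    (X : Submodule ℂ (StrongDual ℂ B)) : Prop where
  closed : IsClosed (X : Set (StrongDual ℂ B))
  rmod : ∀ f ∈ X, ∀ b : B, f.comp (m b) ∈ X
  lmod : ∀ f ∈ X, ∀ b : B, f.comp (m.flip b) ∈ X
  isometric : ∀ b : B,
    @Norm.norm (X →L[ℂ] ℂ) (@ContinuousLinearMap.hasOpNorm ℂ ℂ X ℂ _ _ _ _ _ _ (RingHom.id ℂ))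
      (dualEval B X b) = ‖b‖
  surjective : Function.Surjective (dualEval B X)

end WAPDefs

set_option linter.unusedSectionVars false

section Aux

variable {A B : Type*} [NormedAddCommGroup A] [NormedSpace ℂ A]
  [NormedAddCommGroup B] [NormedSpace ℂ B]

lemma zero_mem_WAPset (m : A →L[ℂ] A →L[ℂ] A) : (0 : StrongDual ℂ A) ∈ WAPset A m := by
  have h : (fun a => toWeakSpace ℂ (StrongDual ℂ A) ((0 : StrongDual ℂ A).comp (m a))) '' closedBall (0 : A) 1
      ⊆ {toWeakSpace ℂ (StrongDual ℂ A) 0} := by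
    rintro _ ⟨a, -, rfl⟩
    simp
  have hK : IsCompact (closure ({toWeakSpace ℂ (StrongDual ℂ A) 0} : Set (WeakSpace ℂ (StrongDual ℂ A)))) :=
    isCompact_singleton.closure
  exact hK.of_isClosed_subset isClosed_closure (closure_mono h)

lemma wapSet_bddAbove (m : A →L[ℂ] A →L[ℂ] A) (a : A) :
    BddAbove {r : ℝ | ∃ f ∈ WAPset A m, ‖f‖ ≤ 1 ∧ r = ‖f a‖} := by
  refine ⟨‖a‖, ?_⟩
  rintro r ⟨f, -, hf1, rfl⟩
  calc ‖f a‖ ≤ ‖f‖ * ‖a‖ := f.le_opNorm a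
    _ ≤ 1 * ‖a‖ := by gcongr
    _ = ‖a‖ := one_mul _

lemma wapSet_nonempty (m : A →L[ℂ] A →L[ℂ] A) (a : A) :
    {r : ℝ | ∃ f ∈ WAPset A m, ‖f‖ ≤ 1 ∧ r = ‖f a‖}.Nonempty :=
  ⟨‖(0 : StrongDual ℂ A) a‖, 0, zero_mem_WAPset m, by simp, rfl⟩

end Aux

section Prod

variable {A B : Type*}
  [NonUnitalNormedRing A] [NormedSpace ℂ A] [IsScalarTower ℂ A A] [SMulCommClass ℂ A A]
  [NonUnitalNormedRing B] [NormedSpace ℂ B] [IsScalarTower ℂ B B] [SMulCommClass ℂ B B]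

lemma comp_fst_mem_WAPset {f : StrongDual ℂ A} (hf : f ∈ WAPset A (ContinuousLinearMap.mul ℂ A)) :
    f.comp (ContinuousLinearMap.fst ℂ A B) ∈ WAPset (A × B) (ContinuousLinearMap.mul ℂ (A × B)) := by
  set T : StrongDual ℂ A →L[ℂ] StrongDual ℂ (A × B) :=
    (ContinuousLinearMap.compL ℂ (A × B) A ℂ).flip (ContinuousLinearMap.fst ℂ A B) with hT
  set SA := (fun a => toWeakSpace ℂ (StrongDual ℂ A) (f.comp (ContinuousLinearMap.mul ℂ A a))) ''
    closedBall (0 : A) 1 with hSA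
  have hK : IsCompact ((WeakSpace.map T) '' closure SA) := hf.image (WeakSpace.map T).continuous
  have hsub : (fun p : A × B => toWeakSpace ℂ (StrongDual ℂ (A × B))
      ((f.comp (ContinuousLinearMap.fst ℂ A B)).comp (ContinuousLinearMap.mul ℂ (A × B) p))) ''
      closedBall (0 : A × B) 1 ⊆ (WeakSpace.map T) '' closure SA := by
    rintro _ ⟨p, hp, rfl⟩
    refine ⟨toWeakSpace ℂ (StrongDual ℂ A) (f.comp (ContinuousLinearMap.mul ℂ A p.1)),
      subset_closure ⟨p.1, ?_, rfl⟩, ?_⟩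
    · simp only [mem_closedBall, dist_zero_right] at hp ⊢
      exact le_trans (norm_fst_le p) hp
    · rfl
  exact hK.closure.of_isClosed_subset isClosed_closure (closure_mono hsub)

end Prod

section Prod2

variable {A B : Type*}
  [NonUnitalNormedRing A] [NormedSpace ℂ A] [IsScalarTower ℂ A A] [SMulCommClass ℂ A A]
  [NonUnitalNormedRing B] [NormedSpace ℂ B] [IsScalarTower ℂ B B] [SMulCommClass ℂ B B]

lemma comp_snd_mem_WAPset {f : StrongDual ℂ B} (hf : f ∈ WAPset B (ContinuousLinearMap.mul ℂ B)) :
    f.comp (ContinuousLinearMap.snd ℂ A B) ∈ WAPset (A × B) (ContinuousLinearMap.mul ℂ (A × B)) := by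
  set T : StrongDual ℂ B →L[ℂ] StrongDual ℂ (A × B) :=
    (ContinuousLinearMap.compL ℂ (A × B) B ℂ).flip (ContinuousLinearMap.snd ℂ A B) with hT
  set SB := (fun b => toWeakSpace ℂ (StrongDual ℂ B) (f.comp (ContinuousLinearMap.mul ℂ B b))) ''
    closedBall (0 : B) 1 with hSB
  have hK : IsCompact ((WeakSpace.map T) '' closure SB) := hf.image (WeakSpace.map T).continuous
  have hsub : (fun p : A × B => toWeakSpace ℂ (StrongDual ℂ (A × B))
      ((f.comp (ContinuousLinearMap.snd ℂ A B)).comp (ContinuousLinearMap.mul ℂ (A × B) p))) ''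
      closedBall (0 : A × B) 1 ⊆ (WeakSpace.map T) '' closure SB := by
    rintro _ ⟨p, hp, rfl⟩
    refine ⟨toWeakSpace ℂ (StrongDual ℂ B) (f.comp (ContinuousLinearMap.mul ℂ B p.2)),
      subset_closure ⟨p.2, ?_, rfl⟩, rfl⟩
    simp only [mem_closedBall, dist_zero_right] at hp ⊢
    exact le_trans (norm_snd_le p) hp
  exact hK.closure.of_isClosed_subset isClosed_closure (closure_mono hsub)

lemma norm_comp_fst_le (f : StrongDual ℂ A) : ‖f.comp (ContinuousLinearMap.fst ℂ A B)‖ ≤ ‖f‖ := by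
  refine opNorm_le_bound _ (norm_nonneg f) fun p => ?_
  calc ‖f p.1‖ ≤ ‖f‖ * ‖p.1‖ := f.le_opNorm _
    _ ≤ ‖f‖ * ‖p‖ := by gcongr; exact norm_fst_le p

lemma norm_comp_snd_le (f : StrongDual ℂ B) : ‖f.comp (ContinuousLinearMap.snd ℂ A B)‖ ≤ ‖f‖ := by
  refine opNorm_le_bound _ (norm_nonneg f) fun p => ?_
  calc ‖f p.2‖ ≤ ‖f‖ * ‖p.2‖ := f.le_opNorm _
    _ ≤ ‖f‖ * ‖p‖ := by gcongr; exact norm_snd_le p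

lemma wapNorm_fst_le (a : A) (b : B) :
    wapNorm A (ContinuousLinearMap.mul ℂ A) a ≤
      wapNorm (A × B) (ContinuousLinearMap.mul ℂ (A × B)) (a, b) := by
  refine csSup_le_csSup (wapSet_bddAbove _ _) (wapSet_nonempty _ _) ?_
  rintro r ⟨f, hf, hf1, rfl⟩
  exact ⟨f.comp (ContinuousLinearMap.fst ℂ A B), comp_fst_mem_WAPset hf,
    le_trans (norm_comp_fst_le f) hf1, rfl⟩

lemma wapNorm_snd_le (a : A) (b : B) :
    wapNorm B (ContinuousLinearMap.mul ℂ B) b ≤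
      wapNorm (A × B) (ContinuousLinearMap.mul ℂ (A × B)) (a, b) := by
  refine csSup_le_csSup (wapSet_bddAbove _ _) (wapSet_nonempty _ _) ?_
  rintro r ⟨f, hf, hf1, rfl⟩
  exact ⟨f.comp (ContinuousLinearMap.snd ℂ A B), comp_snd_mem_WAPset hf,
    le_trans (norm_comp_snd_le f) hf1, rfl⟩

end Prod2


/-- The direct sum of two WAP-algebras (with coordinatewise operations and the max norm) is
a WAP-algebra. -/
theorem isWAPAlgebra_prod {A : Type*} [NonUnitalNormedRing A] [NormedSpace ℂ A] [IsScalarTower ℂ A A] [SMulCommClass ℂ A A] [CompleteSpace A]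
    {B : Type*} [NonUnitalNormedRing B] [NormedSpace ℂ B] [IsScalarTower ℂ B B] [SMulCommClass ℂ B B] [CompleteSpace B]
    (hA : IsWAPAlgebra A (ContinuousLinearMap.mul ℂ A))
    (hB : IsWAPAlgebra B (ContinuousLinearMap.mul ℂ B)) :
    IsWAPAlgebra (A × B) (ContinuousLinearMap.mul ℂ (A × B)) := by
  obtain ⟨cA, hcA, hA⟩ := hA
  obtain ⟨cB, hcB, hB⟩ := hB
  refine ⟨min cA cB, lt_min hcA hcB, ?_⟩
  rintro ⟨a, b⟩
  have hnorm : ‖((a, b) : A × B)‖ = max ‖a‖ ‖b‖ := rfl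
  rcases max_cases ‖a‖ ‖b‖ with ⟨h1, h2⟩ | ⟨h1, h2⟩
  · calc min cA cB * ‖((a, b) : A × B)‖ ≤ cA * ‖a‖ := by
          rw [hnorm, h1]; gcongr; exact min_le_left _ _
      _ ≤ wapNorm A (ContinuousLinearMap.mul ℂ A) a := hA a
      _ ≤ _ := wapNorm_fst_le a b
  · calc min cA cB * ‖((a, b) : A × B)‖ ≤ cB * ‖b‖ := by
          rw [hnorm, h1]; gcongr; exact min_le_right _ _
      _ ≤ wapNorm B (ContinuousLinearMap.mul ℂ B) b := hB b
      _ ≤ _ := wapNorm_snd_le a b
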